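/- With G_q = ⟨x, y | x² = y^q⟩, q odd, and ρ_{ℓ,t} : G_q → SU(2) the representation with ρ_{ℓ,t}(x) = i and ρ_{ℓ,t}(y) = cos((2ℓ-1)π/q) + sin((2ℓ-1)π/q)(cos(πt)i + sin(πt)j), the meridian m = x y^{(1-q)/2} satisfies Tr(ρ_{ℓ,t}(m)) = 2(-1)^{ℓ-1} cos((2ℓ-1)π/(2q)) cos(πt). -/

import Mathlib

/-- The relation `x² y^{-q}` of the `(2,q)` torus knot group `G_q = ⟨x, y ∣ x² = y^q⟩`;
`x` is `FreeGroup.of true`, `y` is `FreeGroup.of false`. -/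
def torusRels (q : ℕ) : Set (FreeGroup Bool) :=
  {FreeGroup.of true ^ 2 * (FreeGroup.of false ^ q)⁻¹}

/-- The `(2,q)` torus knot group `G_q = ⟨x, y ∣ x² = y^q⟩`. -/
def TorusGroup (q : ℕ) := PresentedGroup (torusRels q)

instance (q : ℕ) : Group (TorusGroup q) := by unfold TorusGroup; infer_instance

/-- The meridian `m = x · y^{(1-q)/2}` of the `(2,q)` torus knot. -/
def meridian (q : ℕ) : TorusGroup q :=
  PresentedGroup.of true * PresentedGroup.of false ^ ((1 - (q : ℤ)) / 2)

lemma quat_rot_pow (c s : ℝ) (h : c ^ 2 + s ^ 2 = 1) (β : ℝ) (n : ℕ) :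
    (⟨Real.cos β, Real.sin β * c, Real.sin β * s, 0⟩ : Quaternion ℝ) ^ n =
      ⟨Real.cos (n * β), Real.sin (n * β) * c, Real.sin (n * β) * s, 0⟩ := by
  induction n with
  | zero =>
    simp only [pow_zero, Nat.cast_zero, zero_mul, Real.cos_zero, Real.sin_zero]
    ext <;> simp
  | succ n ih =>
    rw [pow_succ, ih, QuaternionAlgebra.mk_mul_mk]
    simp only [QuaternionAlgebra.mk.injEq, Nat.cast_succ, add_mul, one_mul,
      Real.cos_add, Real.sin_add]
    refine ⟨by linear_combination (-(Real.sin (↑n * β) * Real.sin β)) * h, by ring, by ring, by ring⟩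


/-- for the representation `ρ_{ℓ,t}` of `G_q` (unit quaternions ≅ SU(2))
with `ρ_{ℓ,t}(x) = i` and `ρ_{ℓ,t}(y) = cos((2ℓ-1)π/q) + sin((2ℓ-1)π/q)(cos(πt)i + sin(πt)j)`,
the meridian `m = x y^{(1-q)/2}` satisfies
`Tr(ρ_{ℓ,t}(m)) = 2(-1)^{ℓ-1} cos((2ℓ-1)π/(2q)) cos(πt)`, where `Tr(A) = 2 re(A)`. -/
theorem stmt_17 (q : ℕ) (hq : Odd q) (hq0 : 0 < q)
    (ℓ : ℕ) (hℓ1 : 1 ≤ ℓ) (hℓ2 : ℓ ≤ (q - 1) / 2)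
    (t : ℝ) (ht0 : 0 < t) (ht1 : t < 1)
    (φ : TorusGroup q →* Quaternion ℝ)
    (hx : φ (PresentedGroup.of true) = (⟨0, 1, 0, 0⟩ : Quaternion ℝ))
    (hy : φ (PresentedGroup.of false) =
      (⟨Real.cos ((2 * ℓ - 1) * Real.pi / q),
        Real.sin ((2 * ℓ - 1) * Real.pi / q) * Real.cos (Real.pi * t),
        Real.sin ((2 * ℓ - 1) * Real.pi / q) * Real.sin (Real.pi * t), 0⟩ : Quaternion ℝ)) :
    2 * (φ (meridian q)).re =
      2 * (-1 : ℝ) ^ (ℓ - 1) * Real.cos ((2 * ℓ - 1) * Real.pi / (2 * q)) *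
        Real.cos (Real.pi * t) := by
  obtain ⟨n, hn⟩ := hq
  set α : ℝ := (2 * ℓ - 1) * Real.pi / q with hα
  set c : ℝ := Real.cos (Real.pi * t) with hc
  set s : ℝ := Real.sin (Real.pi * t) with hs
  have hcs : c ^ 2 + s ^ 2 = 1 := by
    rw [hc, hs]; rw [add_comm]; exact Real.sin_sq_add_cos_sq _
  set y : TorusGroup q := PresentedGroup.of false with hy'
  have hexp : (1 - (q : ℤ)) / 2 = -(n : ℤ) := by omega
  have hm : φ (meridian q) = φ (PresentedGroup.of true) * (φ (y⁻¹)) ^ n := by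
    rw [meridian, hexp, zpow_neg, zpow_natCast, ← inv_pow]
    exact (map_mul φ _ _).trans (congrArg _ (map_pow φ _ n))
  have h1 : φ (y⁻¹) * φ y = 1 := by rw [← map_mul, inv_mul_cancel, map_one]
  have hyne : φ y ≠ 0 := by
    intro h0
    rw [h0, mul_zero] at h1
    exact zero_ne_one h1
  have hZ : φ (y⁻¹) =
      (⟨Real.cos (-α), Real.sin (-α) * c, Real.sin (-α) * s, 0⟩ : Quaternion ℝ) := by
    have h2 : (⟨Real.cos (-α), Real.sin (-α) * c, Real.sin (-α) * s, 0⟩ : Quaternion ℝ) *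
        (⟨Real.cos α, Real.sin α * c, Real.sin α * s, 0⟩ : Quaternion ℝ) = 1 := by
      rw [show (1 : QuaternionAlgebra ℝ (-1) 0 (-1)) = ⟨1, 0, 0, 0⟩ by ext <;> simp]
      rw [QuaternionAlgebra.mk_mul_mk]
      simp only [QuaternionAlgebra.mk.injEq, Real.cos_neg, Real.sin_neg]
      refine ⟨by linear_combination (Real.sin α)^2 * hcs + Real.sin_sq_add_cos_sq α, by ring, by ring, by ring⟩
    refine mul_right_cancel₀ hyne (h1.trans ?_)
    rw [hy]
    exact h2.symm
  have hψ : φ (meridian q) = (⟨0, 1, 0, 0⟩ : Quaternion ℝ) *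
      (⟨Real.cos (n * -α), Real.sin (n * -α) * c, Real.sin (n * -α) * s, 0⟩ : Quaternion ℝ) := by
    rw [hm, hx, hZ]
    exact congrArg (fun z : QuaternionAlgebra ℝ (-1) 0 (-1) => (⟨0, 1, 0, 0⟩ : Quaternion ℝ) * z) (quat_rot_pow c s hcs (-α) n)
  rw [hψ, QuaternionAlgebra.mk_mul_mk]
  show 2 * ((0:ℝ) * Real.cos (↑n * -α) + -1 * 1 * (Real.sin (↑n * -α) * c) +
      -1 * 0 * (Real.sin (↑n * -α) * s) + 0 * -1 * 0 * 0 - -1 * -1 * 0 * 0) = _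
  have hre : ((0:ℝ) * Real.cos (↑n * -α) + -1 * 1 * (Real.sin (↑n * -α) * c) +
      -1 * 0 * (Real.sin (↑n * -α) * s) + 0 * -1 * 0 * 0 - -1 * -1 * 0 * 0) = Real.sin (↑n * α) * c := by
    simp only [mul_neg, Real.sin_neg]; ring
  rw [hre]
  -- trig identity
  subst hn
  have h2n : (2 * (n : ℝ) + 1) ≠ 0 := by positivity
  have hna : (n : ℝ) * α = ℓ * Real.pi -
      (Real.pi / 2 + (2 * ℓ - 1) * Real.pi / (2 * (2 * n + 1 : ℕ))) := by
    rw [hα]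
    push_cast
    field_simp
    ring
  rw [hna, Real.sin_nat_mul_pi_sub, Real.sin_add, Real.sin_pi_div_two, Real.cos_pi_div_two]
  obtain ⟨m, rfl⟩ : ∃ m, ℓ = m + 1 := ⟨ℓ - 1, by omega⟩
  simp only [Nat.add_sub_cancel, pow_succ]
  push_cast
  ring
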